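/- arXiv:quant-ph/0404071 — 9 statements merged into one kernel-verified Lean document; each statement's English description precedes it below -/
import Mathlib

section
/- Let (Σ, L, ξ) be a state property system with Cartan map κ. Then κ(0) = ∅, κ(I) = Σ, and for every family (a_i)_{i∈J} in L one has κ(⋀_i a_i) = ⋂_i κ(a_i). Consequently the image κ(L) = {κ(a) | a ∈ L} is a collection of subsets of Σ containing ∅ and Σ and closed under arbitrary intersections of nonempty subfamilies, i.e. (Σ, κ(L)) is a closure space. -/
/-- The Cartan map of a state property system: `κ a = {p | a ∈ ξ p}`. -/
def cartan {S L : Type*} (ξ : S → Set L) (a : L) : Set S := {p | a ∈ ξ p}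

/-- `(S, L, ξ)` is a state property system. -/
structure IsSPS {S L : Type*} [CompleteLattice L] (ξ : S → Set L) : Prop where
  bot_not_mem : ∀ p, (⊥ : L) ∉ ξ p
  sInf_mem : ∀ p (A : Set L), (∀ a ∈ A, a ∈ ξ p) → sInf A ∈ ξ p
  le_iff : ∀ a b : L, a ≤ b ↔ ∀ r, a ∈ ξ r → b ∈ ξ r
/-- `F` is the family of closed sets of a closure space on `X`. -/
def IsClosureSpace {X : Type*} (F : Set (Set X)) : Prop :=
  ∅ ∈ F ∧ Set.univ ∈ F ∧ ∀ G ⊆ F, G.Nonempty → ⋂₀ G ∈ F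

lemma sInf_mem_iff {S L : Type*} [CompleteLattice L] {ξ : S → Set L} (hξ : IsSPS ξ)
    (p : S) (A : Set L) : sInf A ∈ ξ p ↔ ∀ a ∈ A, a ∈ ξ p := by
  constructor
  · intro h a ha
    exact (hξ.le_iff (sInf A) a).mp (sInf_le ha) p h
  · exact hξ.sInf_mem p A

/-- the Cartan map sends `0` to `∅`, `I` to `Σ`, arbitrary infima to
intersections, and its image is a closure structure on `Σ`. -/
theorem stmt0 {S L : Type*} [CompleteLattice L] (ξ : S → Set L) (hξ : IsSPS ξ) :
    cartan ξ (⊥ : L) = ∅ ∧ cartan ξ (⊤ : L) = Set.univ ∧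
    (∀ {ι : Type*} (a : ι → L), cartan ξ (⨅ i, a i) = ⋂ i, cartan ξ (a i)) ∧
    IsClosureSpace (Set.range (cartan ξ)) := by
  have hbot : cartan ξ (⊥ : L) = ∅ := by
    ext p; simp [cartan, hξ.bot_not_mem p]
  have htop : cartan ξ (⊤ : L) = Set.univ := by
    ext p
    simp only [cartan, Set.mem_setOf_eq, Set.mem_univ, iff_true]
    have := hξ.sInf_mem p ∅ (by simp)
    simpa using this
  refine ⟨hbot, htop, ?_, ?_⟩
  · intro ι a
    ext p
    simp only [cartan, Set.mem_setOf_eq, Set.mem_iInter, iInf, sInf_mem_iff hξ]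
    simp
  · refine ⟨⟨⊥, hbot⟩, ⟨⊤, htop⟩, ?_⟩
    intro G hG _
    obtain ⟨A, hA⟩ : ∃ A : Set L, cartan ξ '' A = G := by
      refine ⟨cartan ξ ⁻¹' G ∩ {a | cartan ξ a ∈ G}, ?_⟩
      ext s
      simp only [Set.mem_image]
      constructor
      · rintro ⟨a, ⟨_, ha⟩, rfl⟩; exact ha
      · intro hs
        obtain ⟨a, rfl⟩ := hG hs
        exact ⟨a, ⟨hs, hs⟩, rfl⟩
    refine ⟨sInf A, ?_⟩
    ext p
    simp only [cartan, Set.mem_setOf_eq, sInf_mem_iff hξ, ← hA, Set.mem_sInter,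
      Set.mem_image]
    constructor
    · rintro h s ⟨a, ha, rfl⟩; exact h a ha
    · intro h a ha; exact h _ ⟨a, ha, rfl⟩
end

section
/- Let (X, F) be a closure space and define ξ̄ : X → P(F) by ξ̄(p) = {F ∈ F | p ∈ F}. Then, with F ordered by inclusion (so that F is a complete lattice in which the infimum of a nonempty family is its intersection, the bottom element is ∅ and the top element is X), the triple (X, F, ξ̄) is a state property system: (i) ∅ ∉ ξ̄(p) for all p; (ii) if F_i ∈ ξ̄(p) for all i in a family then the infimum of the F_i in F belongs to ξ̄(p); (iii) for F, G ∈ F, F ⊆ G if and only if every p ∈ X with F ∈ ξ̄(p) satisfies G ∈ ξ̄(p). -/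
/-- for a closure space `(X, F)`, the map `ξ̄ p = {F ∈ F | p ∈ F}` makes
`(X, F, ξ̄)` a state property system (with `F` ordered by inclusion, where the infimum of
a nonempty family is its intersection, the bottom is `∅` and the top is `X`). -/
theorem stmt2 {X : Type*} (F : Set (Set X)) (hF : IsClosureSpace F) :
    let ξb : X → Set (Set X) := fun p => {f | f ∈ F ∧ p ∈ f}
    -- (i) the bottom element `∅` of `F` belongs to no `ξ̄ p`
    (∀ p, (∅ : Set X) ∉ ξb p) ∧
    -- (ii) infima (in `F`) of families inside `ξ̄ p` stay in `ξ̄ p`: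
    -- the empty family has infimum the top element `X`, a nonempty family has
    -- infimum its intersection
    (∀ p, (Set.univ : Set X) ∈ ξb p) ∧
    (∀ p, ∀ G ⊆ ξb p, G.Nonempty → ⋂₀ G ∈ ξb p) ∧
    -- (iii) the order of `F` is determined by `ξ̄`
    (∀ f ∈ F, ∀ g ∈ F, f ⊆ g ↔ ∀ p, f ∈ ξb p → g ∈ ξb p) := by
  obtain ⟨h0, hu, hInt⟩ := hF
  intro ξb
  refine ⟨fun p hp => hp.2, fun p => ⟨hu, trivial⟩, ?_, ?_⟩
  · intro p G hG hne
    refine ⟨hInt G (fun g hg => (hG hg).1) hne, ?_⟩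
    exact fun g hg => (hG hg).2
  · intro f hf g hg
    constructor
    · intro hsub p hp
      exact ⟨hg, hsub hp.2⟩
    · intro h p hp
      exact (h p ⟨hf, hp⟩).2
end

section
/- Let (Σ, L, ξ) be a state property system with Cartan map κ, let (Σ, κ(L)) be its associated closure space and let ξ̄ : Σ → P(κ(L)) be given by ξ̄(p) = {F ∈ κ(L) | p ∈ F}. Then the pair (id_Σ, κ) is an isomorphism of state property systems from (Σ, L, ξ) to (Σ, κ(L), ξ̄): κ : L → κ(L) is an order-preserving bijection whose inverse is order-preserving, and for all a ∈ L and p ∈ Σ one has a ∈ ξ(p) if and only if κ(a) ∈ ξ̄(p). -/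
/-- `(id, κ)` is an isomorphism of state property systems from
`(Σ, L, ξ)` to `(Σ, κ(L), ξ̄)`: `κ : L → κ(L)` is an order-preserving bijection with
order-preserving inverse, and `a ∈ ξ(p) ↔ κ(a) ∈ ξ̄(p)`. -/
theorem stmt4 {S L : Type*} [CompleteLattice L] (ξ : S → Set L) (hξ : IsSPS ξ) :
    let ξb : S → Set (Set S) := fun p => {f | f ∈ Set.range (cartan ξ) ∧ p ∈ f}
    (∃ e : L ≃o Set.range (cartan ξ), ∀ a : L, (e a : Set S) = cartan ξ a) ∧
    (∀ (a : L) (p : S), a ∈ ξ p ↔ cartan ξ a ∈ ξb p) := by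
  intro ξb
  have hle : ∀ a b : L, a ≤ b ↔ cartan ξ a ⊆ cartan ξ b := by
    intro a b
    rw [hξ.le_iff]
    exact Iff.rfl
  have hinj : Function.Injective (cartan ξ) := by
    intro a b h
    exact le_antisymm ((hle a b).2 h.le) ((hle b a).2 h.ge)
  refine ⟨⟨⟨⟨fun a => ⟨cartan ξ a, Set.mem_range_self a⟩,
      fun f => Classical.choose f.2, ?_, ?_⟩, ?_⟩, fun a => rfl⟩, ?_⟩
  · intro a
    exact hinj (Classical.choose_spec (Set.mem_range_self (f := cartan ξ) a))
  · intro f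
    exact Subtype.ext (Classical.choose_spec f.2)
  · intro a b
    exact ((hle a b).symm)
  · intro a p
    exact ⟨fun h => ⟨Set.mem_range_self a, h⟩, fun h => h.2⟩
end

section
/- Let (Σ, L, ξ) be a state property system with Cartan map κ. Then every two properties of L are separated by a superselection rule (i.e. a ssr b for all a, b ∈ L) if and only if the associated closure space (Σ, κ(L)) is a topological space, i.e. the collection κ(L) is additionally closed under finite unions (so that κ(L) is exactly the family of closed sets of a topology on Σ). -/
/-- `a` and `b` are separated by a superselection rule. -/
def Ssr {S L : Type*} [CompleteLattice L] (ξ : S → Set L) (a b : L) : Prop :=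
  ∀ p, a ⊔ b ∈ ξ p → a ∈ ξ p ∨ b ∈ ξ p

/-- `a` is a classical property of the state property system. -/
def IsClassicalProp {S L : Type*} [CompleteLattice L] (ξ : S → Set L) (a : L) : Prop :=
  ∃ ac : L, a ⊔ ac = ⊤ ∧ a ⊓ ac = ⊥ ∧ Ssr ξ a ac

/-- every two properties are separated by a superselection rule iff
`(Σ, κ(L))` is a topological space, i.e. `κ(L)` is additionally closed under finite
unions (together with `∅, Σ ∈ κ(L)` and closure under intersections, which always hold,
this means `κ(L)` is exactly the family of closed sets of a topology on `Σ`). -/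
theorem stmt6 {S L : Type*} [CompleteLattice L] (ξ : S → Set L) (hξ : IsSPS ξ) :
    (∀ a b : L, Ssr ξ a b) ↔
    (∀ A ∈ Set.range (cartan ξ), ∀ B ∈ Set.range (cartan ξ),
      A ∪ B ∈ Set.range (cartan ξ)) := by
  constructor
  · rintro h _ ⟨a, rfl⟩ _ ⟨b, rfl⟩
    refine ⟨a ⊔ b, ?_⟩
    ext p
    constructor
    · intro hp
      exact h a b p hp
    · rintro (hp | hp)
      · exact (hξ.le_iff a (a ⊔ b)).mp le_sup_left p hp
      · exact (hξ.le_iff b (a ⊔ b)).mp le_sup_right p hp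
  · intro h a b p hp
    obtain ⟨c, hc⟩ := h _ ⟨a, rfl⟩ _ ⟨b, rfl⟩
    have ha : a ≤ c := (hξ.le_iff a c).mpr fun r hr => by
      have : r ∈ cartan ξ c := hc ▸ Or.inl hr
      exact this
    have hb : b ≤ c := (hξ.le_iff b c).mpr fun r hr => by
      have : r ∈ cartan ξ c := hc ▸ Or.inr hr
      exact this
    have : c ∈ ξ p := (hξ.le_iff (a ⊔ b) c).mp (sup_le ha hb) p hp
    have : p ∈ cartan ξ a ∪ cartan ξ b := hc ▸ this
    exact this
end

section
/- Let (Σ, L, ξ) be a state property system with Cartan map κ. Then (Σ, L, ξ) is a pure nonclassical state property system (i.e. the only classical properties in L are 0 and I) if and only if the associated closure space (Σ, κ(L)) is connected (i.e. the only subsets A ⊆ Σ with both A ∈ κ(L) and Σ \ A ∈ κ(L) are ∅ and Σ). -/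
/-- `(Σ, L, ξ)` is pure nonclassical (its only classical properties are
`0` and `I`) iff the closure space `(Σ, κ(L))` is connected (its only clopen subsets
are `∅` and `Σ`). -/
theorem stmt8 {S L : Type*} [CompleteLattice L] (ξ : S → Set L) (hξ : IsSPS ξ) :
    (∀ a : L, IsClassicalProp ξ a → a = ⊥ ∨ a = ⊤) ↔
    (∀ A : Set S, A ∈ Set.range (cartan ξ) → Aᶜ ∈ Set.range (cartan ξ) →
      A = ∅ ∨ A = Set.univ) := by
  have htop : ∀ p, (⊤ : L) ∈ ξ p := by
    intro p
    simpa using hξ.sInf_mem p ∅ (by simp)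
  have hup : ∀ {a b : L}, a ≤ b → ∀ r, a ∈ ξ r → b ∈ ξ r := by
    intro a b h; exact (hξ.le_iff a b).mp h
  have hinf : ∀ (a b : L) (p), a ∈ ξ p → b ∈ ξ p → a ⊓ b ∈ ξ p := by
    intro a b p ha hb
    have := hξ.sInf_mem p {a, b} (by
      intro x hx; rcases hx with rfl | rfl
      · exact ha
      · exact hb)
    simpa using this
  constructor
  · intro h A hA hAc
    obtain ⟨a, rfl⟩ := hA
    obtain ⟨b, hb⟩ := hAc
    have hclass : IsClassicalProp ξ a := by
      refine ⟨b, ?_, ?_, ?_⟩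
      · -- a ⊔ b = ⊤
        refine le_antisymm le_top ((hξ.le_iff ⊤ (a ⊔ b)).mpr ?_)
        intro r _
        have : r ∈ cartan ξ a ∨ r ∈ (cartan ξ a)ᶜ := by
          by_cases hr : r ∈ cartan ξ a
          · exact Or.inl hr
          · exact Or.inr hr
        rcases this with hr | hr
        · exact hup le_sup_left r hr
        · rw [← hb] at hr
          exact hup le_sup_right r hr
      · -- a ⊓ b = ⊥
        refine le_antisymm ((hξ.le_iff (a ⊓ b) ⊥).mpr ?_) bot_le
        intro r hr
        have ha : r ∈ cartan ξ a := hup inf_le_left r hr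
        have hbm : r ∈ cartan ξ b := hup inf_le_right r hr
        rw [hb] at hbm
        exact absurd ha hbm
      · -- Ssr
        intro p _
        by_cases hp : p ∈ cartan ξ a
        · exact Or.inl hp
        · right
          have : p ∈ (cartan ξ a)ᶜ := hp
          rw [← hb] at this
          exact this
    rcases h a hclass with rfl | rfl
    · left
      ext p
      simp only [Set.mem_empty_iff_false, iff_false]
      exact hξ.bot_not_mem p
    · right
      ext p
      simp only [Set.mem_univ, iff_true]
      exact htop p
  · intro h a ⟨ac, hsup, hinf', hssr⟩
    have hcompl : (cartan ξ a)ᶜ = cartan ξ ac := by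
      ext p
      constructor
      · intro hp
        have : a ⊔ ac ∈ ξ p := by rw [hsup]; exact htop p
        rcases hssr p this with ha | hac
        · exact absurd ha hp
        · exact hac
      · intro hp ha
        have : a ⊓ ac ∈ ξ p := hinf a ac p ha hp
        rw [hinf'] at this
        exact hξ.bot_not_mem p this
    rcases h (cartan ξ a) ⟨a, rfl⟩ ⟨ac, hcompl.symm⟩ with he | hu
    · left
      refine le_antisymm ((hξ.le_iff a ⊥).mpr ?_) bot_le
      intro r hr
      exact absurd (show r ∈ cartan ξ a from hr) (by simp [he])
    · right
      refine le_antisymm le_top ((hξ.le_iff ⊤ a).mpr ?_)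
      intro r _
      have : r ∈ cartan ξ a := by rw [hu]; trivial
      exact this
end

section
/- Let (X, F) be a closure space and x ∈ X. Then the connection component K(x) is a closed set, i.e. K(x) ∈ F. -/
/-- `B` is a closed set of the subspace induced on `A` by the closure structure `F`. -/
def SubClosed {X : Type*} (F : Set (Set X)) (A B : Set X) : Prop :=
  ∃ f ∈ F, B = f ∩ A

/-- `A` is a connected subset: the only clopen subsets of the induced subspace are `∅` and `A`. -/
def IsConnSubset {X : Type*} (F : Set (Set X)) (A : Set X) : Prop :=
  ∀ B ⊆ A, SubClosed F A B → SubClosed F A (A \ B) → B = ∅ ∨ B = A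

/-- The connection component of `x`: the union of all connected subsets containing `x`. -/
def connComp {X : Type*} (F : Set (Set X)) (x : X) : Set X :=
  ⋃₀ {A : Set X | x ∈ A ∧ IsConnSubset F A}

lemma sub_restrict {X : Type*} (F : Set (Set X)) {K A B : Set X} (hA : A ⊆ K)
    (h : SubClosed F K B) : SubClosed F A (B ∩ A) := by
  obtain ⟨f, hf, rfl⟩ := h
  exact ⟨f, hf, by rw [Set.inter_assoc, Set.inter_eq_right.mpr hA]⟩

lemma diff_restrict {X : Type*} {K A B : Set X} (hA : A ⊆ K) (_hB : B ⊆ K) :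
    A \ (B ∩ A) = (K \ B) ∩ A := by
  ext y
  simp only [Set.mem_diff, Set.mem_inter_iff]
  constructor
  · rintro ⟨hyA, h⟩
    exact ⟨⟨hA hyA, fun hb => h ⟨hb, hyA⟩⟩, hyA⟩
  · rintro ⟨⟨_, hnb⟩, hyA⟩
    exact ⟨hyA, fun h => hnb h.1⟩

/-- connection components are closed sets. -/
theorem stmt12 {X : Type*} (F : Set (Set X)) (hF : IsClosureSpace F) (x : X) :
    connComp F x ∈ F := by
  obtain ⟨hempty, huniv, hinter⟩ := hF
  set K := connComp F x with hKdef
  have hxK : x ∈ K := by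
    refine ⟨{x}, ⟨rfl, fun B hB _ _ => ?_⟩, rfl⟩
    rcases Set.subset_singleton_iff_eq.mp hB with h | h
    · exact Or.inl h
    · exact Or.inr h
  have hmemK : ∀ {A : Set X}, x ∈ A → IsConnSubset F A → A ⊆ K :=
    fun {A} hxA hc z hz => ⟨A, ⟨hxA, hc⟩, hz⟩
  -- K is connected
  have hKconn : IsConnSubset F K := by
    intro B hB hBc hBcc
    by_cases hx : x ∈ B
    · right
      refine Set.Subset.antisymm hB fun y hy => ?_
      obtain ⟨A, ⟨hxA, hAconn⟩, hyA⟩ := hy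
      have hAK : A ⊆ K := hmemK hxA hAconn
      have hrest := hAconn (B ∩ A) Set.inter_subset_right (sub_restrict F hAK hBc)
        (by rw [diff_restrict hAK hB]; exact sub_restrict F hAK hBcc)
      rcases hrest with h | h
      · exact absurd (Set.eq_empty_iff_forall_notMem.mp h x ⟨hx, hxA⟩) (fun h => h)
      · have : y ∈ B ∩ A := by rw [h]; exact hyA
        exact this.1
    · left
      by_contra hne
      obtain ⟨y, hy⟩ := Set.nonempty_iff_ne_empty.mpr hne
      obtain ⟨A, ⟨hxA, hAconn⟩, hyA⟩ := hB hy
      have hAK : A ⊆ K := hmemK hxA hAconn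
      have hrest := hAconn (B ∩ A) Set.inter_subset_right (sub_restrict F hAK hBc)
        (by rw [diff_restrict hAK hB]; exact sub_restrict F hAK hBcc)
      rcases hrest with h | h
      · exact Set.eq_empty_iff_forall_notMem.mp h y ⟨hy, hyA⟩
      · have : x ∈ B ∩ A := by rw [h]; exact hxA
        exact hx this.1
  -- closure of K
  set G : Set (Set X) := {f ∈ F | K ⊆ f} with hGdef
  have hGF : G ⊆ F := fun f hf => hf.1
  have hGne : G.Nonempty := ⟨Set.univ, huniv, Set.subset_univ _⟩
  set cl : Set X := ⋂₀ G with hcldef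
  have hclF : cl ∈ F := hinter G hGF hGne
  have hKcl : K ⊆ cl := fun y hy => Set.mem_sInter.mpr fun f hf => hf.2 hy
  -- cl is connected
  have hclconn : IsConnSubset F cl := by
    rintro B hB ⟨f, hf, hBeq⟩ ⟨g, hg, hgeq⟩
    have hrest := hKconn (B ∩ K) Set.inter_subset_right
      (sub_restrict F hKcl ⟨f, hf, hBeq⟩)
      (by rw [diff_restrict hKcl hB]; exact sub_restrict F hKcl ⟨g, hg, hgeq⟩)
    rcases hrest with h | h
    · left
      have hKg : K ⊆ g := by
        intro y hy
        have : y ∈ cl \ B := ⟨hKcl hy, fun hyB => Set.eq_empty_iff_forall_notMem.mp h y ⟨hyB, hy⟩⟩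
        rw [hgeq] at this; exact this.1
      have hclg : cl ⊆ g := fun y hy => Set.mem_sInter.mp hy g ⟨hg, hKg⟩
      ext y
      simp only [Set.mem_empty_iff_false, iff_false]
      intro hyB
      have : y ∈ cl \ B := by rw [hgeq]; exact ⟨hclg (hB hyB), hB hyB⟩
      exact this.2 hyB
    · right
      have hKf : K ⊆ f := by
        intro y hy
        have : y ∈ B ∩ K := by rw [h]; exact hy
        rw [hBeq] at this; exact this.1.1
      have hclf : cl ⊆ f := fun y hy => Set.mem_sInter.mp hy f ⟨hf, hKf⟩
      rw [hBeq]
      exact Set.inter_eq_right.mpr hclf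
  have : cl ⊆ K := hmemK (hKcl hxK) hclconn
  have hKeq : K = cl := Set.Subset.antisymm hKcl this
  exact hKeq ▸ hclF
end

section
/- Let (Σ, L, ξ) be a state property system with Cartan map κ, let ω ⊆ Σ be a connection component of the associated closure space (Σ, κ(L)), and suppose s(ω) ∈ L is a property with κ(s(ω)) = ω. Set Σ_ω = ω, L_ω = [0, s(ω)] = {a ∈ L | 0 ≤ a ≤ s(ω)} (a complete lattice with top s(ω) and bottom 0, with the order induced from L), and ξ_ω : Σ_ω → P(L_ω), ξ_ω(p) = ξ(p) ∩ L_ω. Then (Σ_ω, L_ω, ξ_ω) is a pure nonclassical state property system, i.e. it satisfies the three axioms of a state property system and its only classical properties are 0 and s(ω). -/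
/- Auxiliary: `x` belongs to its connection component. -/
lemma mem_connComp {X : Type*} (F : Set (Set X)) (x : X) : x ∈ connComp F x := by
  refine ⟨{x}, ⟨rfl, ?_⟩, rfl⟩
  intro B hB _ _
  rcases Set.subset_singleton_iff_eq.mp hB with h | h
  · exact Or.inl h
  · exact Or.inr h

/- Auxiliary: the connection component is connected. -/
lemma connComp_isConn {X : Type*} (F : Set (Set X)) (x : X) :
    IsConnSubset F (connComp F x) := by
  set ω := connComp F x with hωdef
  intro B hB hB1 hB2
  obtain ⟨f, hf, hBf⟩ := hB1
  obtain ⟨g, hg, hCg⟩ := hB2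
  -- key claim: for every connected A containing x (hence A ⊆ ω), B ∩ A = ∅ or A
  have key : ∀ A : Set X, x ∈ A → IsConnSubset F A → B ∩ A = ∅ ∨ B ∩ A = A := by
    intro A hxA hA
    have hAω : A ⊆ ω := fun y hy => ⟨A, ⟨hxA, hA⟩, hy⟩
    refine hA (B ∩ A) Set.inter_subset_right ⟨f, hf, ?_⟩ ⟨g, hg, ?_⟩
    · rw [hBf]; ext y
      exact ⟨fun ⟨⟨h1, _⟩, h2⟩ => ⟨h1, h2⟩, fun ⟨h1, h2⟩ => ⟨⟨h1, hAω h2⟩, h2⟩⟩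
    · ext y
      constructor
      · rintro ⟨hyA, hyB⟩
        have : y ∈ ω \ B := ⟨hAω hyA, fun h => hyB ⟨h, hyA⟩⟩
        rw [hCg] at this
        exact ⟨this.1, hyA⟩
      · rintro ⟨hyg, hyA⟩
        have : y ∈ ω \ B := hCg ▸ ⟨hyg, hAω hyA⟩
        exact ⟨hyA, fun hb => this.2 hb.1⟩
  by_cases hx : x ∈ B
  · right
    refine Set.Subset.antisymm hB (fun y hy => ?_)
    obtain ⟨A, ⟨hxA, hA⟩, hyA⟩ := hy
    rcases key A hxA hA with h | h
    · exact absurd (Set.eq_empty_iff_forall_notMem.mp h x) (fun hn => hn ⟨hx, hxA⟩)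
    · exact (show y ∈ B ∩ A from h.symm ▸ hyA).1
  · left
    rw [Set.eq_empty_iff_forall_notMem]
    intro y hy
    obtain ⟨A, ⟨hxA, hA⟩, hyA⟩ := hB hy
    rcases key A hxA hA with h | h
    · exact Set.eq_empty_iff_forall_notMem.mp h y ⟨hy, hyA⟩
    · exact hx (show x ∈ B ∩ A from h.symm ▸ hxA).1

/-- if `ω` is a connection component of `(Σ, κ(L))` and `s(ω) ∈ L`
satisfies `κ(s(ω)) = ω`, then `(Σ_ω, L_ω, ξ_ω)`, with `Σ_ω = ω`,
`L_ω = [0, s(ω)]` (a complete lattice with the order induced from `L`) and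
`ξ_ω(p) = ξ(p) ∩ L_ω`, is a pure nonclassical state property system. -/
theorem stmt13 {S L : Type*} [CompleteLattice L] (ξ : S → Set L) (hξ : IsSPS ξ)
    (ω : Set S) (hω : ∃ x : S, ω = connComp (Set.range (cartan ξ)) x)
    (s : L) (hs : cartan ξ s = ω) [Fact ((⊥ : L) ≤ s)] :
    let ξω : ω → Set (Set.Icc (⊥ : L) s) := fun p => {a | (a : L) ∈ ξ (p : S)}
    IsSPS ξω ∧ (∀ a : Set.Icc (⊥ : L) s, IsClassicalProp ξω a → a = ⊥ ∨ a = ⊤) := by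
  intro ξω
  -- states in ω actualize s
  have hsω : ∀ p ∈ ω, s ∈ ξ p := by
    intro p hp; rw [← hs] at hp; exact hp
  -- any state actualizing a property below s lies in ω
  have hmemω : ∀ (a : Set.Icc (⊥ : L) s) (r : S), (a : L) ∈ ξ r → r ∈ ω := by
    intro a r har
    have : s ∈ ξ r := (hξ.le_iff (a : L) s).mp a.2.2 r har
    rw [← hs]; exact this
  have hconn : IsConnSubset (Set.range (cartan ξ)) ω := by
    obtain ⟨x, hx⟩ := hω
    rw [hx]; exact connComp_isConn _ x
  constructor
  · constructor
    · -- bot not mem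
      intro p h
      exact hξ.bot_not_mem p (h : ((⊥ : Set.Icc (⊥ : L) s) : L) ∈ ξ (p : S))
    · -- sInf mem
      intro p A hA
      rcases Set.eq_empty_or_nonempty A with rfl | hne
      · show ((sInf (∅ : Set (Set.Icc (⊥ : L) s)) : Set.Icc (⊥ : L) s) : L) ∈ ξ (p : S)
        rw [sInf_empty]
        exact hsω p p.2
      · show ((sInf A : Set.Icc (⊥ : L) s) : L) ∈ ξ (p : S)
        rw [Set.Icc.coe_sInf bot_le hne]
        refine hξ.sInf_mem p _ ?_
        rintro _ ⟨a, ha, rfl⟩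
        exact hA a ha
    · -- le iff
      intro a b
      constructor
      · intro hab r har
        exact (hξ.le_iff (a : L) (b : L)).mp hab r har
      · intro h
        show (a : L) ≤ (b : L)
        refine (hξ.le_iff (a : L) (b : L)).mpr (fun r har => ?_)
        exact h ⟨r, hmemω a r har⟩ har
  · -- pure nonclassicality
    rintro a ⟨ac, hsup, hinf, hssr⟩
    -- coerce the lattice identities to L
    have hsupL : (a : L) ⊔ (ac : L) = s := congrArg Subtype.val hsup
    have hinfL : (a : L) ⊓ (ac : L) = ⊥ := congrArg Subtype.val hinf
    set B : Set S := cartan ξ (a : L) ∩ ω with hBdef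
    -- states in ω not in B actualize ac, and vice versa
    have hsplit : ω \ B = cartan ξ (ac : L) ∩ ω := by
      ext p
      constructor
      · rintro ⟨hpω, hpB⟩
        have hsup_mem : (a : L) ⊔ (ac : L) ∈ ξ p := by rw [hsupL]; exact hsω p hpω
        rcases hssr ⟨p, hpω⟩ hsup_mem with h | h
        · exact absurd ⟨h, hpω⟩ hpB
        · exact ⟨h, hpω⟩
      · rintro ⟨hpac, hpω⟩
        refine ⟨hpω, fun hpB => ?_⟩
        have : (a : L) ⊓ (ac : L) ∈ ξ p := by
          have := hξ.sInf_mem p {(a : L), (ac : L)} (by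
            rintro x hx
            rcases hx with rfl | rfl
            · exact hpB.1
            · exact hpac)
          rwa [sInf_pair] at this
        rw [hinfL] at this
        exact hξ.bot_not_mem p this
    have hclosedB : SubClosed (Set.range (cartan ξ)) ω B :=
      ⟨cartan ξ (a : L), Set.mem_range_self _, rfl⟩
    have hclosedC : SubClosed (Set.range (cartan ξ)) ω (ω \ B) :=
      ⟨cartan ξ (ac : L), Set.mem_range_self _, hsplit⟩
    rcases hconn B Set.inter_subset_right hclosedB hclosedC with h | h
    · -- B = ∅ : a = ⊥
      left
      apply Subtype.ext
      refine le_antisymm ?_ bot_le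
      refine (hξ.le_iff (a : L) ⊥).mpr (fun r har => ?_)
      exact absurd (Set.eq_empty_iff_forall_notMem.mp h r ⟨har, hmemω a r har⟩) not_false
    · -- B = ω : a = ⊤
      right
      apply Subtype.ext
      show (a : L) = s
      refine le_antisymm a.2.2 ?_
      refine (hξ.le_iff s (a : L)).mpr (fun r hsr => ?_)
      have : r ∈ ω := by rw [← hs]; exact hsr
      exact ((h ▸ this : r ∈ B).1 : (a : L) ∈ ξ r)
end

section
/- Let (X, F) be a closure space, let Ω be the set of connection components of (X, F), and let q : X → Ω be the canonical surjection sending each point to its connection component. Equip Ω with the quotient closure structure C = {B ⊆ Ω | q⁻¹(B) ∈ F}. Then (Ω, C) is a closure space, q is continuous, and (Ω, C) is totally disconnected, i.e. for every ω ∈ Ω the connection component of ω in (Ω, C) is the singleton {ω}. -/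
section Aux

variable {X : Type*} (F : Set (Set X))

lemma aux_singleton (x : X) : IsConnSubset F {x} := by
  intro B hB _ _
  rcases Set.subset_singleton_iff_eq.mp hB with h | h
  · exact Or.inl h
  · exact Or.inr h

lemma aux_mem (x : X) : x ∈ connComp F x :=
  Set.mem_sUnion.mpr ⟨{x}, ⟨rfl, aux_singleton F x⟩, rfl⟩

lemma aux_subset {A : Set X} {x : X} (hA : IsConnSubset F A) (hx : x ∈ A) :
    A ⊆ connComp F x :=
  Set.subset_sUnion_of_mem ⟨hx, hA⟩

lemma aux_conn (x : X) : IsConnSubset F (connComp F x) := by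
  intro B hB hB1 hB2
  obtain ⟨f, hf, hBf⟩ := hB1
  obtain ⟨g, hg, hCg⟩ := hB2
  have key : ∀ A, x ∈ A → IsConnSubset F A → B ∩ A = ∅ ∨ B ∩ A = A := by
    intro A hxA hA
    have hAU : A ⊆ connComp F x := aux_subset F hA hxA
    refine hA (B ∩ A) Set.inter_subset_right ⟨f, hf, ?_⟩ ⟨g, hg, ?_⟩
    · rw [hBf, Set.inter_assoc, Set.inter_eq_self_of_subset_right hAU]
    · ext z
      constructor
      · rintro ⟨hzA, hz⟩
        have hzU : z ∈ connComp F x := hAU hzA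
        have hzg : z ∈ g ∩ connComp F x := by
          rw [← hCg]; exact ⟨hzU, fun hzB => hz ⟨hzB, hzA⟩⟩
        exact ⟨hzg.1, hzA⟩
      · rintro ⟨hzg, hzA⟩
        have hzd : z ∈ connComp F x \ B := by rw [hCg]; exact ⟨hzg, hAU hzA⟩
        exact ⟨hzA, fun hz => hzd.2 hz.1⟩
  by_cases hx : x ∈ B
  · right
    refine Set.Subset.antisymm hB fun y hy => ?_
    obtain ⟨A, ⟨hxA, hA⟩, hyA⟩ := hy
    rcases key A hxA hA with h | h
    · have hxBA : x ∈ B ∩ A := ⟨hx, hxA⟩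
      rw [h] at hxBA
      exact hxBA.elim
    · rw [← h] at hyA
      exact hyA.1
  · left
    ext y
    simp only [Set.mem_empty_iff_false, iff_false]
    intro hyB
    obtain ⟨A, ⟨hxA, hA⟩, hyA⟩ := hB hyB
    rcases key A hxA hA with h | h
    · have hyBA : y ∈ B ∩ A := ⟨hyB, hyA⟩
      rw [h] at hyBA
      exact hyBA.elim
    · have hxBA : x ∈ B ∩ A := by rw [h]; exact hxA
      exact hx hxBA.1

lemma aux_eq {x y : X} (h : y ∈ connComp F x) : connComp F x = connComp F y := by
  have h1 : connComp F x ⊆ connComp F y := aux_subset F (aux_conn F x) h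
  have h2 : connComp F y ⊆ connComp F x := aux_subset F (aux_conn F y) (h1 (aux_mem F x))
  exact h1.antisymm h2

lemma aux_closed (hF : IsClosureSpace F) (x : X) : connComp F x ∈ F := by
  set c := ⋂₀ {g | g ∈ F ∧ connComp F x ⊆ g} with hc
  have hcF : c ∈ F :=
    hF.2.2 _ (fun g hg => hg.1) ⟨Set.univ, hF.2.1, Set.subset_univ _⟩
  have hUc : connComp F x ⊆ c := fun z hz => Set.mem_sInter.mpr fun g hg => hg.2 hz
  have hconn : IsConnSubset F c := by
    rintro B hB ⟨f, hf, hBf⟩ ⟨g, hg, hCg⟩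
    have key := aux_conn F x (B ∩ connComp F x) Set.inter_subset_right
      ⟨f, hf, by rw [hBf, Set.inter_assoc, Set.inter_eq_self_of_subset_right hUc]⟩
      ⟨g, hg, ?_⟩
    · rcases key with h | h
      · left
        have hUcd : connComp F x ⊆ c \ B := fun z hz =>
          ⟨hUc hz, fun hzB => (Set.eq_empty_iff_forall_notMem.mp h z) ⟨hzB, hz⟩⟩
        have hUg : connComp F x ⊆ g := fun z hz => by
          have := hUcd hz; rw [hCg] at this; exact this.1
        have hcg : c ⊆ g := Set.sInter_subset_of_mem ⟨hg, hUg⟩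
        ext z
        simp only [Set.mem_empty_iff_false, iff_false]
        intro hzB
        have hzc : z ∈ c := hB hzB
        have : z ∈ c \ B := by rw [hCg]; exact ⟨hcg hzc, hzc⟩
        exact this.2 hzB
      · right
        have hUB : connComp F x ⊆ B := fun z hz => by
          have : z ∈ B ∩ connComp F x := by rw [h]; exact hz
          exact this.1
        have hUf : connComp F x ⊆ f := fun z hz => by
          have := hUB hz; rw [hBf] at this; exact this.1
        have hcf : c ⊆ f := Set.sInter_subset_of_mem ⟨hf, hUf⟩
        rw [hBf, Set.inter_eq_self_of_subset_right hcf]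
    · ext z
      constructor
      · rintro ⟨hzU, hz⟩
        have hzg : z ∈ g ∩ c := by
          rw [← hCg]; exact ⟨hUc hzU, fun hzB => hz ⟨hzB, hzU⟩⟩
        exact ⟨hzg.1, hzU⟩
      · rintro ⟨hzg, hzU⟩
        have hzd : z ∈ c \ B := by rw [hCg]; exact ⟨hzg, hUc hzU⟩
        exact ⟨hzU, fun hz => hzd.2 hz.1⟩
  have hcU : c ⊆ connComp F x := aux_subset F hconn (hUc (aux_mem F x))
  rw [hUc.antisymm hcU]
  exact hcF

end Aux

/-- the quotient of a closure space by its connection components, with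
the quotient closure structure, is a closure space, the canonical surjection is
continuous, and the quotient is totally disconnected. -/
theorem stmt14 {X : Type*} (F : Set (Set X)) (hF : IsClosureSpace F) :
    let Ω := {A : Set X // ∃ x : X, A = connComp F x}
    let q : X → Ω := fun x => ⟨connComp F x, x, rfl⟩
    let C : Set (Set Ω) := {B | q ⁻¹' B ∈ F}
    IsClosureSpace C ∧ (∀ B ∈ C, q ⁻¹' B ∈ F) ∧
    (∀ ω : Ω, connComp C ω = {ω}) := by
  intro Ω q C
  have hinter : ∀ a b : Set X, a ∈ F → b ∈ F → a ∩ b ∈ F := by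
    intro a b ha hb
    rw [← Set.sInter_pair]
    refine hF.2.2 _ ?_ ⟨a, Set.mem_insert _ _⟩
    rintro s (rfl | rfl)
    · exact ha
    · exact hb
  have hCclosure : IsClosureSpace C := by
    refine ⟨?_, ?_, ?_⟩
    · show q ⁻¹' ∅ ∈ F
      rw [Set.preimage_empty]; exact hF.1
    · show q ⁻¹' Set.univ ∈ F
      rw [Set.preimage_univ]; exact hF.2.1
    · intro G hG hGne
      show q ⁻¹' ⋂₀ G ∈ F
      rw [Set.preimage_sInter, ← Set.sInter_image]
      refine hF.2.2 _ ?_ (hGne.image _)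
      rintro s ⟨B, hB, rfl⟩
      exact hG hB
  have hsurj : ∀ w : Ω, ∃ u : X, q u = w := by
    intro w
    obtain ⟨u, hu⟩ := w.2
    exact ⟨u, Subtype.ext hu.symm⟩
  have hfiber : ∀ x y : X, q y = q x ↔ y ∈ connComp F x := by
    intro x y
    constructor
    · intro h
      have h1 : connComp F y = connComp F x := congrArg Subtype.val h
      rw [← h1]
      exact aux_mem F y
    · intro h
      exact Subtype.ext (aux_eq F h).symm
  refine ⟨hCclosure, fun B hB => hB, ?_⟩
  intro ω
  apply Set.Subset.antisymm
  · intro ω' hω'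
    by_contra hne
    obtain ⟨x, hx⟩ := hsurj ω
    obtain ⟨y, hy⟩ := hsurj ω'
    set W : Set X := q ⁻¹' connComp C ω with hW
    have hWF : W ∈ F := aux_closed C hCclosure ω
    have hxW : x ∈ W := by
      show q x ∈ connComp C ω
      rw [hx]; exact aux_mem C ω
    have hyW : y ∈ W := by
      show q y ∈ connComp C ω
      rw [hy]; exact hω'
    have hWnotconn : ¬ IsConnSubset F W := by
      intro hconn
      have hsub : W ⊆ connComp F x := aux_subset F hconn hxW
      have heq : q y = q x := (hfiber x y).mpr (hsub hyW)
      rw [hx, hy] at heq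
      exact hne (Set.mem_singleton_iff.mpr heq)
    rw [IsConnSubset] at hWnotconn
    push_neg at hWnotconn
    obtain ⟨B, hBW, hB1, hB2, hBne, hBneW⟩ := hWnotconn
    obtain ⟨f, hf, hBf⟩ := hB1
    obtain ⟨g, hg, hWBg⟩ := hB2
    -- saturation: any clopen piece of W is a union of components
    have hsatgen : ∀ (D f₁ g₁ : Set X), D = f₁ ∩ W → W \ D = g₁ ∩ W →
        f₁ ∈ F → g₁ ∈ F → ∀ z ∈ D, connComp F z ⊆ D := by
      intro D f₁ g₁ hDf hDg hf₁ hg₁ z hz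
      have hDW : D ⊆ W := by rw [hDf]; exact Set.inter_subset_right
      have hzW : z ∈ W := hDW hz
      have hKW : connComp F z ⊆ W := by
        intro w hw
        show q w ∈ connComp C ω
        have hqw : q w = q z := (hfiber z w).mpr hw
        rw [hqw]
        exact hzW
      have key := aux_conn F z (D ∩ connComp F z) Set.inter_subset_right
        ⟨f₁, hf₁, by rw [hDf, Set.inter_assoc, Set.inter_eq_self_of_subset_right hKW]⟩
        ⟨g₁, hg₁, ?_⟩
      · rcases key with h | h
        · have hzD : z ∈ D ∩ connComp F z := ⟨hz, aux_mem F z⟩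
          rw [h] at hzD
          exact hzD.elim
        · intro w hw
          have : w ∈ D ∩ connComp F z := by rw [h]; exact hw
          exact this.1
      · ext u
        constructor
        · rintro ⟨huK, hu⟩
          have hug : u ∈ g₁ ∩ W := by
            rw [← hDg]; exact ⟨hKW huK, fun huD => hu ⟨huD, huK⟩⟩
          exact ⟨hug.1, huK⟩
        · rintro ⟨hug, huK⟩
          have hud : u ∈ W \ D := by rw [hDg]; exact ⟨hug, hKW huK⟩
          exact ⟨huK, fun hu => hud.2 hu.1⟩
    have hsatB : ∀ z ∈ B, connComp F z ⊆ B := hsatgen B f g hBf hWBg hf hg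
    have hsatB' : ∀ z ∈ W \ B, connComp F z ⊆ W \ B :=
      hsatgen (W \ B) g f hWBg (by rw [Set.diff_diff_cancel_left hBW, hBf]) hg hf
    have hpre : q ⁻¹' (q '' B) = B := by
      apply Set.Subset.antisymm
      · intro w hw
        obtain ⟨b, hb, hqb⟩ := hw
        exact hsatB b hb ((hfiber b w).mp hqb.symm)
      · exact Set.subset_preimage_image q B
    have hpre' : q ⁻¹' (q '' (W \ B)) = W \ B := by
      apply Set.Subset.antisymm
      · intro w hw
        obtain ⟨b, hb, hqb⟩ := hw
        exact hsatB' b hb ((hfiber b w).mp hqb.symm)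
      · exact Set.subset_preimage_image q (W \ B)
    have hDC : q '' B ∈ C := by
      show q ⁻¹' (q '' B) ∈ F
      rw [hpre, hBf]
      exact hinter f W hf hWF
    have hD'C : q '' (W \ B) ∈ C := by
      show q ⁻¹' (q '' (W \ B)) ∈ F
      rw [hpre', hWBg]
      exact hinter g W hg hWF
    have hDsub : q '' B ⊆ connComp C ω := by
      rintro _ ⟨b, hb, rfl⟩
      exact hBW hb
    have hD'sub : q '' (W \ B) ⊆ connComp C ω := by
      rintro _ ⟨b, hb, rfl⟩
      exact hb.1
    have hcompl : connComp C ω \ q '' B = q '' (W \ B) := by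
      apply Set.Subset.antisymm
      · rintro w ⟨hwK, hwD⟩
        obtain ⟨u, hu⟩ := hsurj w
        have huW : u ∈ W := by show q u ∈ connComp C ω; rw [hu]; exact hwK
        have huB : u ∉ B := fun h => hwD ⟨u, h, hu⟩
        exact ⟨u, ⟨huW, huB⟩, hu⟩
      · rintro _ ⟨u, ⟨huW, huB⟩, rfl⟩
        refine ⟨huW, fun h => ?_⟩
        have : u ∈ q ⁻¹' (q '' B) := h
        rw [hpre] at this
        exact huB this
    have key := aux_conn C ω (q '' B) hDsub
      ⟨q '' B, hDC, (Set.inter_eq_self_of_subset_left hDsub).symm⟩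
      ⟨q '' (W \ B), hD'C,
        hcompl.trans (Set.inter_eq_self_of_subset_left hD'sub).symm⟩
    rcases key with h | h
    · obtain ⟨b, hb⟩ := hBne
      have : q b ∈ q '' B := ⟨b, hb, rfl⟩
      rw [h] at this
      exact this.elim
    · refine hBneW ?_
      rw [← hpre, h]
  · intro z hz
    rw [Set.mem_singleton_iff] at hz
    subst hz
    exact Set.singleton_subset_iff.mpr (aux_mem C z) (Set.mem_singleton z)
end

section
/- Let (Σ, L, ξ) be a state property system and let C' = {⋀_i a_i | (a_i)_i a family of classical properties of L} be the set of all infima of families of classical properties, and define ξ' : Σ → P(C') by ξ'(p) = ξ(p) ∩ C'. Then C', with the order induced from L, is a complete lattice (with bottom 0 and top I, and with infima computed as in L), and (Σ, C', ξ') is a state property system, called the classical part of (Σ, L, ξ). -/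
/-- the set `C'` of all infima of families of classical properties, with
the order induced from `L`, is a complete lattice (it is closed under the infima of `L`
and contains `0` and `I`), and `(Σ, C', ξ')` with `ξ'(p) = ξ(p) ∩ C'` is a state
property system — the classical part of `(Σ, L, ξ)`. -/
theorem stmt15 {S L : Type*} [CompleteLattice L] (ξ : S → Set L) (hξ : IsSPS ξ) :
    let C' : Set L := {a | ∃ A : Set L, (∀ b ∈ A, IsClassicalProp ξ b) ∧ a = sInf A}
    -- `C'` is a complete lattice: infima are computed as in `L`,
    -- the bottom is `0` and the top is `I`
    (∀ A : Set L, A ⊆ C' → sInf A ∈ C') ∧ (⊥ : L) ∈ C' ∧ (⊤ : L) ∈ C' ∧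
    -- axiom (i): the bottom `0` of `C'` belongs to no `ξ'(p) = ξ(p) ∩ C'`
    (∀ p, (⊥ : L) ∉ ξ p ∩ C') ∧
    -- axiom (ii): `ξ'(p)` is closed under infima of `C'`
    (∀ p, ∀ A ⊆ C', (∀ a ∈ A, a ∈ ξ p ∩ C') → sInf A ∈ ξ p ∩ C') ∧
    -- axiom (iii): the order of `C'` is determined by `ξ'`
    (∀ a ∈ C', ∀ b ∈ C', a ≤ b ↔ ∀ r, a ∈ ξ r ∩ C' → b ∈ ξ r ∩ C') := by
  intro C'
  have hclosed : ∀ A : Set L, A ⊆ C' → sInf A ∈ C' := by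
    intro A hA
    choose B hB hEq using fun a (ha : a ∈ A) => hA ha
    refine ⟨⋃ a ∈ A, ⋃ (h : a ∈ A), B a h, ?_, ?_⟩
    · intro b hb
      simp only [Set.mem_iUnion] at hb
      obtain ⟨a, ha, _, hb⟩ := hb
      exact hB a _ b hb
    · rw [sInf_eq_iInf]
      rw [le_antisymm_iff]
      constructor
      · apply le_sInf
        intro b hb
        simp only [Set.mem_iUnion] at hb
        obtain ⟨a, ha, ha', hb⟩ := hb
        refine le_trans (iInf_le _ a) ?_
        refine le_trans (iInf_le _ ha) ?_
        rw [hEq a ha]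
        exact sInf_le hb
      · apply le_iInf; intro a; apply le_iInf; intro ha
        rw [hEq a ha, le_sInf_iff]
        intro b hb
        apply sInf_le
        simp only [Set.mem_iUnion]
        exact ⟨a, ha, ha, hb⟩
  have hbot : (⊥ : L) ∈ C' := by
    refine ⟨{⊥}, ?_, by simp⟩
    intro b hb
    rw [Set.mem_singleton_iff] at hb
    subst hb
    exact ⟨⊤, by simp, by simp, fun p hp => Or.inr (by simpa using hp)⟩
  have htop : (⊤ : L) ∈ C' := ⟨∅, by simp, by simp⟩
  refine ⟨hclosed, hbot, htop, ?_, ?_, ?_⟩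
  · intro p hp
    exact hξ.bot_not_mem p hp.1
  · intro p A hA hmem
    exact ⟨hξ.sInf_mem p A fun a ha => (hmem a ha).1, hclosed A hA⟩
  · intro a ha b hb
    rw [hξ.le_iff]
    constructor
    · intro h r hr
      exact ⟨h r hr.1, hb⟩
    · intro h r hr
      exact (h r ⟨hr, ha⟩).1
end
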